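/- Let R be an algebraic curvature tensor on a vector space V with nondegenerate symmetric bilinear form, and let π be a nondegenerate k-dimensional subspace. Then the higher order Jacobi operator J(π) := Σᵢ εᵢ J(eᵢ), where {e₁,...,e_k} is an orthonormal basis of π with εᵢ = ⟨eᵢ,eᵢ⟩ = ±1, is independent of the choice of orthonormal basis of π. -/

import Mathlib

section Aux
variable {V : Type*} [AddCommGroup V] [Module ℝ V]

lemma upd1 (y a b z x : V) :
    Function.update ![y, a, b, z] 1 x = ![y, x, b, z] := by
  ext i; fin_cases i <;> simp

lemma upd2 (y a b z x : V) :
    Function.update ![y, a, b, z] 2 x = ![y, a, x, z] := by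
  ext i; fin_cases i <;> simp

/-- bilinear map `(a, b) ↦ R ![y, a, b, z]`. -/
noncomputable def Rbil (R : MultilinearMap ℝ (fun _ : Fin 4 => V) ℝ) (y z : V) :
    V →ₗ[ℝ] V →ₗ[ℝ] ℝ :=
  LinearMap.mk₂ ℝ (fun a b => R ![y, a, b, z])
    (fun a a' b => by
      have h := R.map_update_add ![y, a, b, z] 1 a a'
      simpa [upd1] using h)
    (fun c a b => by
      have h := R.map_update_smul ![y, a, b, z] 1 c a
      simpa [upd1] using h)
    (fun a b b' => by
      have h := R.map_update_add ![y, a, b, z] 2 b b'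
      simpa [upd2] using h)
    (fun c a b => by
      have h := R.map_update_smul ![y, a, b, z] 2 c b
      simpa [upd2] using h)

@[simp] lemma Rbil_apply (R : MultilinearMap ℝ (fun _ : Fin 4 => V) ℝ) (y z a b : V) :
    Rbil R y z a b = R ![y, a, b, z] := rfl

end Aux

theorem higher_jacobi_well_defined {V : Type*} [AddCommGroup V] [Module ℝ V]
    [FiniteDimensional ℝ V]
    (B : V →ₗ[ℝ] V →ₗ[ℝ] ℝ)
    (hBsymm : ∀ x y, B x y = B y x)
    (hBnd : ∀ x, (∀ y, B x y = 0) → x = 0)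
    (R : MultilinearMap ℝ (fun _ : Fin 4 => V) ℝ)
    (hR1 : ∀ x y z w, R ![x, y, z, w] = - R ![y, x, z, w])
    (hR2 : ∀ x y z w, R ![x, y, z, w] = R ![z, w, x, y])
    (hR3 : ∀ x y z w, R ![x, y, z, w] + R ![y, z, x, w] + R ![z, x, y, w] = 0)
    (Jac : V → V → V)
    (hJac : ∀ x y z, B (Jac x y) z = R ![y, x, x, z])
    (π : Submodule ℝ V) (k : ℕ)
    (e f : Fin k → V) (ε δ : Fin k → ℝ)
    (hε : ∀ i, ε i = 1 ∨ ε i = -1)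
    (hδ : ∀ i, δ i = 1 ∨ δ i = -1)
    (he : ∀ i j, B (e i) (e j) = if i = j then ε i else 0)
    (hf : ∀ i j, B (f i) (f j) = if i = j then δ i else 0)
    (hespan : Submodule.span ℝ (Set.range e) = π)
    (hfspan : Submodule.span ℝ (Set.range f) = π) :
    ∀ y, ∑ i, ε i • Jac (e i) y = ∑ i, δ i • Jac (f i) y := by
  have hε2 : ∀ i, ε i * ε i = 1 := fun i => by rcases hε i with h | h <;> rw [h] <;> norm_num
  have hδ2 : ∀ j, δ j * δ j = 1 := fun j => by rcases hδ j with h | h <;> rw [h] <;> norm_num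
  -- expansion in the e-basis
  have hBe : ∀ v ∈ π, ∑ i, (ε i * B (e i) v) • e i = v := by
    intro v hv
    rw [← hespan] at hv
    obtain ⟨a, rfl⟩ := (Submodule.mem_span_range_iff_exists_fun ℝ).mp hv
    have key : ∀ i, ε i * B (e i) (∑ l, a l • e l) = a i := by
      intro i
      rw [map_sum]
      have : ∀ l, B (e i) (a l • e l) = a l * (if i = l then ε i else 0) := by
        intro l; rw [map_smul, he, smul_eq_mul]
      simp only [this, mul_ite, mul_zero, Finset.sum_ite_eq, Finset.mem_univ, if_true]
      rw [← mul_assoc, mul_comm (ε i) (a i), mul_assoc, hε2, mul_one]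
    refine Finset.sum_congr rfl fun i _ => ?_
    rw [key]
  -- expansion in the f-basis
  have hBf : ∀ v ∈ π, ∑ j, (δ j * B (f j) v) • f j = v := by
    intro v hv
    rw [← hfspan] at hv
    obtain ⟨a, rfl⟩ := (Submodule.mem_span_range_iff_exists_fun ℝ).mp hv
    have key : ∀ j, δ j * B (f j) (∑ l, a l • f l) = a j := by
      intro j
      rw [map_sum]
      have : ∀ l, B (f j) (a l • f l) = a l * (if j = l then δ j else 0) := by
        intro l; rw [map_smul, hf, smul_eq_mul]
      simp only [this, mul_ite, mul_zero, Finset.sum_ite_eq, Finset.mem_univ, if_true]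
      rw [← mul_assoc, mul_comm (δ j) (a j), mul_assoc, hδ2, mul_one]
    refine Finset.sum_congr rfl fun j _ => ?_
    rw [key]
  have heπ : ∀ i, e i ∈ π := fun i => by
    rw [← hespan]; exact Submodule.subset_span ⟨i, rfl⟩
  have hfπ : ∀ j, f j ∈ π := fun j => by
    rw [← hfspan]; exact Submodule.subset_span ⟨j, rfl⟩
  -- the key orthogonality relation
  have keyrel : ∀ i i', ∑ j, δ j * B (e i) (f j) * B (e i') (f j)
      = if i = i' then ε i else 0 := by
    intro i i'
    have expand := hBf (e i') (heπ i')
    have : B (e i) (e i') = ∑ j, δ j * B (e i) (f j) * B (e i') (f j) := by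
      conv_lhs => rw [← expand]
      rw [map_sum]
      refine Finset.sum_congr rfl fun j _ => ?_
      rw [map_smul, smul_eq_mul, hBsymm (f j) (e i')]
      ring
    rw [← this, he]
  -- main argument
  intro y
  set c : Fin k → Fin k → ℝ := fun i j => ε i * B (e i) (f j) with hc
  have hfexp : ∀ j, ∑ i, c i j • e i = f j := fun j => hBe (f j) (hfπ j)
  rw [← sub_eq_zero]
  apply hBnd
  intro z
  simp only [map_sub, map_sum, LinearMap.sub_apply, LinearMap.sum_apply, map_smul,
    LinearMap.smul_apply, smul_eq_mul, hJac]
  rw [sub_eq_zero]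
  have Tdef : ∀ a b : V, R ![y, a, b, z] = Rbil R y z a b := fun a b => rfl
  simp only [Tdef]
  -- expand each f j
  have expand : ∀ j, Rbil R y z (f j) (f j)
      = ∑ i, ∑ i', c i j * c i' j * Rbil R y z (e i) (e i') := by
    intro j
    conv_lhs => rw [← hfexp j]
    simp only [map_sum, LinearMap.sum_apply, map_smul, LinearMap.smul_apply, smul_eq_mul,
      Finset.mul_sum]
    rw [Finset.sum_comm]
    refine Finset.sum_congr rfl fun i _ => Finset.sum_congr rfl fun i' _ => ?_
    ring
  have swap : ∀ A : Fin k → Fin k → Fin k → ℝ,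
      (∑ i, ∑ i', ∑ j, A i i' j) = ∑ j, ∑ i, ∑ i', A i i' j := by
    intro A
    calc (∑ i, ∑ i', ∑ j, A i i' j) = ∑ i, ∑ j, ∑ i', A i i' j :=
          Finset.sum_congr rfl fun i _ => Finset.sum_comm
      _ = ∑ j, ∑ i, ∑ i', A i i' j := Finset.sum_comm
  calc ∑ i, ε i * Rbil R y z (e i) (e i)
      = ∑ i, ∑ i', (if i = i' then ε i else 0) * Rbil R y z (e i) (e i') := by
        refine Finset.sum_congr rfl fun i _ => ?_
        simp only [ite_mul, zero_mul, Finset.sum_ite_eq, Finset.mem_univ, if_true]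
    _ = ∑ i, ∑ i', (∑ j, δ j * c i j * c i' j) * Rbil R y z (e i) (e i') := by
        refine Finset.sum_congr rfl fun i _ => Finset.sum_congr rfl fun i' _ => ?_
        congr 1
        have h1 : ∑ j, δ j * c i j * c i' j
            = ε i * ε i' * ∑ j, δ j * B (e i) (f j) * B (e i') (f j) := by
          rw [Finset.mul_sum]
          refine Finset.sum_congr rfl fun j _ => ?_
          simp only [hc]; ring
        rw [h1, keyrel]
        rcases eq_or_ne i i' with h | h
        · subst h
          simp only [if_pos rfl]
          rcases hε i with h2 | h2 <;> rw [h2] <;> norm_num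
        · simp [h]
    _ = ∑ j, δ j * Rbil R y z (f j) (f j) := by
        simp only [Finset.sum_mul]
        rw [swap]
        refine Finset.sum_congr rfl fun j _ => ?_
        rw [expand j, Finset.mul_sum]
        refine Finset.sum_congr rfl fun i _ => ?_
        rw [Finset.mul_sum]
        refine Finset.sum_congr rfl fun i' _ => ?_
        ring
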